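/- Let n ≥ 1 and let b_0, ..., b_n be distinct complex numbers. Define g1^h(u; x0, x1) = Σ_{i=0}^n u_i Π_{k≠i}(x1 + b_k x0), a polynomial bihomogeneous of degree 1 in u and degree n in (x0, x1), and g2^h(u; x0, x1) = Σ_{i=0}^n u_i Π_{k≠i}(x1 + b_k x0)^2, bihomogeneous of degree 1 in u and degree 2n in (x0, x1). The resultant Res_x(g1^h, g2^h) (eliminating the projective variable x = (x0:x1)) is divisible by u_0 · u_1 · ... · u_n · (u_0 + u_1 + ... + u_n) in C[u_0, ..., u_n]. -/

import Mathlib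

open Polynomial

/-- The Sylvester matrix of two polynomials `f` (of degree ≤ m) and `g` (of degree ≤ k):
a `(m+k) × (m+k)` matrix whose first `k` rows are shifted coefficient sequences of `f`
and whose last `m` rows are shifted coefficient sequences of `g`.  Its determinant is
the resultant `Res(f,g)` (with respect to the degrees `m, k`). -/
def sylvester {R : Type*} [CommRing R] (f g : Polynomial R) (m k : ℕ) :
    Matrix (Fin (m + k)) (Fin (m + k)) R :=
  Matrix.of fun i j =>
    if (i : ℕ) < k then
      (if (i : ℕ) ≤ (j : ℕ) then f.coeff ((j : ℕ) - (i : ℕ)) else 0)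
    else
      (if (i : ℕ) - k ≤ (j : ℕ) then g.coeff ((j : ℕ) - ((i : ℕ) - k)) else 0)

lemma row_sum_helper {R : Type*} [CommRing R] (F : R[X]) (i N : ℕ)
    (hdeg : F.natDegree < N - i) (r : R) :
    ∑ j ∈ Finset.range N, (if i ≤ j then F.coeff (j - i) else 0) * r ^ j
      = r ^ i * F.eval r := by
  have hsub : Finset.Ico i N ⊆ Finset.range N := by
    rw [Finset.range_eq_Ico]; exact Finset.Ico_subset_Ico (Nat.zero_le _) le_rfl
  rw [← Finset.sum_subset hsub (by
    intro j hj hj'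
    have h1 : ¬ i ≤ j := by
      simp only [Finset.mem_Ico, Finset.mem_range, not_and, not_le] at hj hj'
      omega
    rw [if_neg h1, zero_mul])]
  rw [Finset.sum_Ico_eq_sum_range]
  rw [Polynomial.eval_eq_sum_range' hdeg, Finset.mul_sum]
  apply Finset.sum_congr rfl
  intro d _
  rw [if_pos (Nat.le_add_right i d), Nat.add_sub_cancel_left, pow_add]
  ring

lemma sylvester_det_eq_zero_of_common_root {R : Type*} [CommRing R] (F G : R[X]) (m k : ℕ)
    (hk : 0 < k) (hF : F.natDegree ≤ m) (hG : G.natDegree ≤ k) (r : R)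
    (hFr : F.eval r = 0) (hGr : G.eval r = 0) : (_root_.sylvester F G m k).det = 0 := by
  set M := _root_.sylvester F G m k with hM
  have hpos : 0 < m + k := by omega
  set v : Fin (m + k) → R := fun j => r ^ (j : ℕ) with hv
  have hmv : M.mulVec v = 0 := by
    funext i
    show ∑ j, M i j * v j = 0
    rcases lt_or_ge (i : ℕ) k with hik | hik
    · calc ∑ j, M i j * v j
          = ∑ j : Fin (m+k), (if (i:ℕ) ≤ (j:ℕ) then F.coeff ((j:ℕ) - (i:ℕ)) else 0) * r ^ (j:ℕ) :=
            Finset.sum_congr rfl (fun j _ => by simp [hM, _root_.sylvester, hik, hv])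
        _ = ∑ j ∈ Finset.range (m+k), (if (i:ℕ) ≤ j then F.coeff (j - (i:ℕ)) else 0) * r ^ j :=
            Fin.sum_univ_eq_sum_range (fun j => (if (i:ℕ) ≤ j then F.coeff (j - (i:ℕ)) else 0) * r ^ j) (m+k)
        _ = r ^ (i:ℕ) * F.eval r := row_sum_helper F _ _ (by omega) r
        _ = 0 := by rw [hFr, mul_zero]
    · have hlt := i.isLt
      calc ∑ j, M i j * v j
          = ∑ j : Fin (m+k), (if (i:ℕ) - k ≤ (j:ℕ) then G.coeff ((j:ℕ) - ((i:ℕ) - k)) else 0) * r ^ (j:ℕ) :=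
            Finset.sum_congr rfl (fun j _ => by simp [hM, _root_.sylvester, not_lt.mpr hik, hv])
        _ = ∑ j ∈ Finset.range (m+k), (if (i:ℕ) - k ≤ j then G.coeff (j - ((i:ℕ) - k)) else 0) * r ^ j :=
            Fin.sum_univ_eq_sum_range (fun j => (if (i:ℕ) - k ≤ j then G.coeff (j - ((i:ℕ) - k)) else 0) * r ^ j) (m+k)
        _ = r ^ ((i:ℕ) - k) * G.eval r := row_sum_helper G _ _ (by omega) r
        _ = 0 := by rw [hGr, mul_zero]
  have h2 : (M.det • (1 : Matrix (Fin (m+k)) (Fin (m+k)) R)).mulVec v = 0 := by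
    rw [← Matrix.adjugate_mul, ← Matrix.mulVec_mulVec, hmv, Matrix.mulVec_zero]
  have h3 := congrFun h2 ⟨0, hpos⟩
  simpa [Matrix.smul_mulVec, Matrix.one_mulVec, hv] using h3

lemma sylvester_det_eq_zero_of_coeff_eq_zero {R : Type*} [CommRing R] (F G : R[X]) (m k : ℕ)
    (hpos : 0 < m + k) (hF : F.natDegree ≤ m) (hFm : F.coeff m = 0)
    (hG : G.natDegree ≤ k) (hGk : G.coeff k = 0) : (_root_.sylvester F G m k).det = 0 := by
  apply Matrix.det_eq_zero_of_column_eq_zero (⟨m + k - 1, by omega⟩ : Fin (m+k))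
  intro i
  have hcF : ∀ d, m ≤ d → F.coeff d = 0 := by
    intro d hd
    rcases eq_or_lt_of_le hd with rfl | h
    · exact hFm
    · exact Polynomial.coeff_eq_zero_of_natDegree_lt (lt_of_le_of_lt hF h)
  have hcG : ∀ d, k ≤ d → G.coeff d = 0 := by
    intro d hd
    rcases eq_or_lt_of_le hd with rfl | h
    · exact hGk
    · exact Polynomial.coeff_eq_zero_of_natDegree_lt (lt_of_le_of_lt hG h)
  have hi := i.isLt
  simp only [_root_.sylvester, Matrix.of_apply]
  split_ifs with h1 h2 h3
  · exact hcF _ (by omega)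
  · rfl
  · exact hcG _ (by omega)
  · rfl

lemma list_prod_primes_dvd {α : Type*} [CommMonoidWithZero α] [IsCancelMulZero α] :
    ∀ (L : List α), (∀ p ∈ L, Prime p) → L.Pairwise (fun p q => ¬ q ∣ p) →
      ∀ n : α, (∀ p ∈ L, p ∣ n) → L.prod ∣ n := by
  intro L
  induction L with
  | nil => intro _ _ n _; simpa using one_dvd n
  | cons a L ih =>
    intro hp hpair n hd
    obtain ⟨m, rfl⟩ := hd a List.mem_cons_self
    rw [List.prod_cons]
    refine mul_dvd_mul_left a (ih (fun p h => hp p (List.mem_cons_of_mem _ h))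
      hpair.of_cons m ?_)
    intro p hpL
    have hprime := hp p (List.mem_cons_of_mem _ hpL)
    have hdvd : p ∣ a * m := hd p (List.mem_cons_of_mem _ hpL)
    rcases hprime.2.2 _ _ hdvd with h | h
    · exact absurd h (List.rel_of_pairwise_cons hpair hpL)
    · exact h



lemma dvd_of_aeval_eq_zero {n : ℕ} (p : MvPolynomial (Fin n) ℂ)
    (v : Fin n → MvPolynomial (Fin n) ℂ)
    (hv : ∀ i, MvPolynomial.X i - v i ∈ Ideal.span {p})
    (f : MvPolynomial (Fin n) ℂ) (hf : MvPolynomial.aeval v f = 0) : p ∣ f := by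
  rw [← Ideal.mem_span_singleton]
  have key : (Ideal.Quotient.mkₐ ℂ (Ideal.span {p})).comp (MvPolynomial.aeval v)
      = Ideal.Quotient.mkₐ ℂ (Ideal.span {p}) := by
    apply MvPolynomial.algHom_ext
    intro i
    simp only [AlgHom.comp_apply, MvPolynomial.aeval_X, Ideal.Quotient.mkₐ_eq_mk]
    exact Ideal.Quotient.eq.mpr (by simpa using (Ideal.span {p}).neg_mem (hv i))
  have h := congrArg (fun g : MvPolynomial (Fin n) ℂ →ₐ[ℂ] _ => g f) key
  simp only [AlgHom.comp_apply, hf, map_zero, Ideal.Quotient.mkₐ_eq_mk] at h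
  rw [← Ideal.Quotient.eq_zero_iff_mem]
  exact h.symm

lemma prime_X_mv (n : ℕ) (i : Fin (n+1)) :
    Prime (MvPolynomial.X i : MvPolynomial (Fin (n+1)) ℂ) := by
  let e := (MvPolynomial.renameEquiv ℂ (Equiv.swap i 0)).trans (MvPolynomial.finSuccEquiv ℂ n)
  rw [← MulEquiv.prime_iff e.toRingEquiv.toMulEquiv]
  have he : e (MvPolynomial.X i) = Polynomial.X := by
    simp [e, MvPolynomial.renameEquiv_apply, MvPolynomial.rename_X, Equiv.swap_apply_left,
      MvPolynomial.finSuccEquiv_X_zero]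
  have : e.toRingEquiv.toMulEquiv (MvPolynomial.X i) = Polynomial.X := he
  rw [this]
  exact Polynomial.prime_X

lemma prime_sum_X (n : ℕ) :
    Prime (∑ i, MvPolynomial.X i : MvPolynomial (Fin (n+1)) ℂ) := by
  classical
  set s : MvPolynomial (Fin (n+1)) ℂ := ∑ i, MvPolynomial.X i with hs
  let w : Fin (n+1) → MvPolynomial (Fin (n+1)) ℂ := fun j => if j = 0 then s else MvPolynomial.X j
  let w' : Fin (n+1) → MvPolynomial (Fin (n+1)) ℂ := fun j =>
    if j = 0 then MvPolynomial.X 0 - ∑ j ∈ Finset.univ.erase 0, MvPolynomial.X j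
    else MvPolynomial.X j
  have hw0 : w 0 = s := if_pos rfl
  have hwi : ∀ i : Fin (n+1), i ≠ 0 → w i = MvPolynomial.X i := fun i h => if_neg h
  have hw'0 : w' 0 = MvPolynomial.X 0 - ∑ j ∈ Finset.univ.erase 0, MvPolynomial.X j := if_pos rfl
  have hw'i : ∀ i : Fin (n+1), i ≠ 0 → w' i = MvPolynomial.X i := fun i h => if_neg h
  have hsum : MvPolynomial.X (0 : Fin (n+1)) + ∑ j ∈ Finset.univ.erase 0, MvPolynomial.X j = s :=
    Finset.add_sum_erase _ _ (Finset.mem_univ 0)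
  have hsw : ∀ (u : Fin (n+1) → MvPolynomial (Fin (n+1)) ℂ),
      (∀ i : Fin (n+1), i ≠ 0 → u i = MvPolynomial.X i) →
      ∑ j ∈ Finset.univ.erase 0, (MvPolynomial.aeval (R := ℂ) u) (MvPolynomial.X j)
        = ∑ j ∈ Finset.univ.erase 0, MvPolynomial.X j := by
    intro u hu
    apply Finset.sum_congr rfl
    intro j hj
    rw [MvPolynomial.aeval_X, hu j (Finset.ne_of_mem_erase hj)]
  have h1 : (MvPolynomial.aeval w).comp (MvPolynomial.aeval w')
      = AlgHom.id ℂ (MvPolynomial (Fin (n+1)) ℂ) := by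
    apply MvPolynomial.algHom_ext
    intro i
    rw [AlgHom.comp_apply, MvPolynomial.aeval_X, AlgHom.id_apply]
    by_cases h : i = 0
    · subst h
      rw [hw'0, map_sub, MvPolynomial.aeval_X, hw0, map_sum, hsw w hwi, ← hsum]
      ring
    · rw [hw'i i h, MvPolynomial.aeval_X, hwi i h]
  have h2 : (MvPolynomial.aeval w').comp (MvPolynomial.aeval w)
      = AlgHom.id ℂ (MvPolynomial (Fin (n+1)) ℂ) := by
    apply MvPolynomial.algHom_ext
    intro i
    rw [AlgHom.comp_apply, MvPolynomial.aeval_X, AlgHom.id_apply]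
    by_cases h : i = 0
    · subst h
      rw [hw0, ← hsum, map_add, MvPolynomial.aeval_X, map_sum, hsw w' hw'i, hw'0]
      ring
    · rw [hwi i h, MvPolynomial.aeval_X, hw'i i h]
  let e : MvPolynomial (Fin (n+1)) ℂ ≃ₐ[ℂ] MvPolynomial (Fin (n+1)) ℂ :=
    AlgEquiv.ofAlgHom (MvPolynomial.aeval w) (MvPolynomial.aeval w') h1 h2
  have he : e.symm.toRingEquiv.toMulEquiv s = MvPolynomial.X 0 := by
    have h3 : e (MvPolynomial.X 0) = s := by
      show MvPolynomial.aeval w (MvPolynomial.X 0) = s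
      rw [MvPolynomial.aeval_X, hw0]
    have h4 := congrArg e.symm h3
    rw [AlgEquiv.symm_apply_apply] at h4
    exact h4.symm
  rw [← MulEquiv.prime_iff e.symm.toRingEquiv.toMulEquiv, he]
  exact prime_X_mv n 0

section MainAux
variable {n : ℕ} (b : Fin (n+1) → ℂ)

/-- auxiliary product polynomial -/
noncomputable def Pp (i : Fin (n+1)) : Polynomial (MvPolynomial (Fin (n+1)) ℂ) :=
  ∏ k ∈ Finset.univ.erase i, (Polynomial.X + Polynomial.C (MvPolynomial.C (b k)))

lemma Pp_monic (i : Fin (n+1)) : (Pp b i).Monic :=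
  Polynomial.monic_prod_of_monic _ _ (fun k _ => Polynomial.monic_X_add_C _)

lemma Pp_natDegree (i : Fin (n+1)) : (Pp b i).natDegree = n := by
  rw [Pp, Polynomial.natDegree_prod_of_monic _ _ (fun k _ => Polynomial.monic_X_add_C _)]
  simp [Polynomial.natDegree_X_add_C, Finset.card_erase_of_mem]

lemma Pp_map (φ : MvPolynomial (Fin (n+1)) ℂ →ₐ[ℂ] MvPolynomial (Fin (n+1)) ℂ) (i : Fin (n+1)) :
    (Pp b i).map φ.toRingHom = Pp b i := by
  rw [Pp, Polynomial.map_prod]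
  apply Finset.prod_congr rfl
  intro k _
  rw [Polynomial.map_add, Polynomial.map_X, Polynomial.map_C]
  congr 1
  show Polynomial.C (φ (MvPolynomial.C (b k))) = _
  rw [show (MvPolynomial.C (b k) : MvPolynomial (Fin (n+1)) ℂ)
      = algebraMap ℂ (MvPolynomial (Fin (n+1)) ℂ) (b k) from rfl, AlgHom.commutes]

lemma Pp_eval_zero (i i0 : Fin (n+1)) (h : i ≠ i0) :
    (Pp b i).eval (MvPolynomial.C (-(b i0))) = 0 := by
  rw [Pp, Polynomial.eval_prod]
  apply Finset.prod_eq_zero (Finset.mem_erase.mpr ⟨Ne.symm h, Finset.mem_univ i0⟩)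
  rw [Polynomial.eval_add, Polynomial.eval_X, Polynomial.eval_C, ← map_add]
  simp

lemma coeff_sum_top (e : ℕ) (Q : Fin (n+1) → Polynomial (MvPolynomial (Fin (n+1)) ℂ))
    (hQ : ∀ i, (Q i).Monic) (hQd : ∀ i, (Q i).natDegree = e) :
    (∑ i, Polynomial.C (MvPolynomial.X i) * Q i).coeff e = ∑ i, MvPolynomial.X i := by
  rw [Polynomial.finset_sum_coeff]
  apply Finset.sum_congr rfl
  intro i _
  rw [Polynomial.coeff_C_mul, ← hQd i, (hQ i).coeff_natDegree, mul_one]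

lemma natDegree_sum_C_mul_le (e : ℕ) (Q : Fin (n+1) → Polynomial (MvPolynomial (Fin (n+1)) ℂ))
    (hQd : ∀ i, (Q i).natDegree ≤ e) :
    (∑ i, Polynomial.C (MvPolynomial.X i) * Q i).natDegree ≤ e :=
  Polynomial.natDegree_sum_le_of_forall_le _ _
    (fun i _ => le_trans (Polynomial.natDegree_C_mul_le _ _) (hQd i))

lemma map_sylvester {R : Type*} [CommRing R] (φ : R →+* R) (F G : R[X]) (m k : ℕ) :
    (_root_.sylvester F G m k).map φ = _root_.sylvester (F.map φ) (G.map φ) m k := by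
  ext i j
  simp only [_root_.sylvester, Matrix.map_apply, Matrix.of_apply, apply_ite φ, map_zero,
    Polynomial.coeff_map]

end MainAux

theorem stmt_15 (n : ℕ) (hn : 1 ≤ n) (b : Fin (n+1) → ℂ) (hb : Function.Injective b) :
    (let f : Polynomial (MvPolynomial (Fin (n+1)) ℂ) :=
      ∑ i, Polynomial.C (MvPolynomial.X i) *
        ∏ k ∈ Finset.univ.erase i, (Polynomial.X + Polynomial.C (MvPolynomial.C (b k)));
    let g : Polynomial (MvPolynomial (Fin (n+1)) ℂ) :=
      ∑ i, Polynomial.C (MvPolynomial.X i) *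
        ∏ k ∈ Finset.univ.erase i, (Polynomial.X + Polynomial.C (MvPolynomial.C (b k))) ^ 2;
    ((∏ i, MvPolynomial.X i) * (∑ i, MvPolynomial.X i) :
        MvPolynomial (Fin (n+1)) ℂ) ∣ (_root_.sylvester f g n (2 * n)).det) := by
  intro f g
  classical
  set s : MvPolynomial (Fin (n+1)) ℂ := ∑ i, MvPolynomial.X i with hs
  set D : MvPolynomial (Fin (n+1)) ℂ := (_root_.sylvester f g n (2 * n)).det with hD
  have hf : f = ∑ i, Polynomial.C (MvPolynomial.X i) * Pp b i := rfl
  have hg : g = ∑ i, Polynomial.C (MvPolynomial.X i) * (Pp b i) ^ 2 := by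
    apply Finset.sum_congr rfl
    intro i _
    rw [Pp, ← Finset.prod_pow]
  have hQdeg : ∀ i : Fin (n+1), ((Pp b i) ^ 2).natDegree = 2 * n := by
    intro i
    rw [(Pp_monic b i).natDegree_pow, Pp_natDegree]
  have hfdeg : f.natDegree ≤ n := by
    rw [hf]; exact natDegree_sum_C_mul_le n _ (fun i => le_of_eq (Pp_natDegree b i))
  have hgdeg : g.natDegree ≤ 2 * n := by
    rw [hg]; exact natDegree_sum_C_mul_le (2*n) _ (fun i => le_of_eq (hQdeg i))
  have hfcoeff : f.coeff n = s := by
    rw [hf, hs]; exact coeff_sum_top n _ (fun i => Pp_monic b i) (fun i => Pp_natDegree b i)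
  have hgcoeff : g.coeff (2*n) = s := by
    rw [hg, hs]; exact coeff_sum_top (2*n) _ (fun i => (Pp_monic b i).pow 2) hQdeg
  -- Claim 1 : each X i divides D
  have claimX : ∀ i0 : Fin (n+1), (MvPolynomial.X i0 : MvPolynomial (Fin (n+1)) ℂ) ∣ D := by
    intro i0
    set v : Fin (n+1) → MvPolynomial (Fin (n+1)) ℂ :=
      fun i => if i = i0 then 0 else MvPolynomial.X i with hv
    set φ : MvPolynomial (Fin (n+1)) ℂ →+* MvPolynomial (Fin (n+1)) ℂ :=
      (MvPolynomial.aeval v).toRingHom with hφ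
    apply dvd_of_aeval_eq_zero _ v
    · intro i
      by_cases h : i = i0
      · subst h
        have hvi : v i = 0 := if_pos rfl
        rw [hvi, sub_zero]
        exact Ideal.subset_span rfl
      · have hvi : v i = MvPolynomial.X i := if_neg h
        rw [hvi, sub_self]
        exact Ideal.zero_mem _
    · show φ D = 0
      rw [hD, RingHom.map_det, RingHom.mapMatrix_apply, map_sylvester]
      set r : MvPolynomial (Fin (n+1)) ℂ := MvPolynomial.C (-(b i0)) with hr
      apply sylvester_det_eq_zero_of_common_root _ _ n (2*n) (by omega) ?_ ?_ r ?_ ?_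
      · exact le_trans Polynomial.natDegree_map_le hfdeg
      · exact le_trans Polynomial.natDegree_map_le hgdeg
      · rw [Polynomial.eval_map, hf, Polynomial.eval₂_finset_sum]
        apply Finset.sum_eq_zero
        intro i _
        rw [Polynomial.eval₂_mul, Polynomial.eval₂_C]
        by_cases h : i = i0
        · subst h
          have : φ (MvPolynomial.X i) = 0 := by
            show MvPolynomial.aeval v (MvPolynomial.X i) = 0
            rw [MvPolynomial.aeval_X, hv]; exact if_pos rfl
          rw [this, zero_mul]
        · have : Polynomial.eval₂ φ r (Pp b i) = 0 := by
            rw [← Polynomial.eval_map, Pp_map b (MvPolynomial.aeval v) i]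
            exact Pp_eval_zero b i i0 h
          rw [this, mul_zero]
      · rw [Polynomial.eval_map, hg, Polynomial.eval₂_finset_sum]
        apply Finset.sum_eq_zero
        intro i _
        rw [Polynomial.eval₂_mul, Polynomial.eval₂_C, Polynomial.eval₂_pow]
        by_cases h : i = i0
        · subst h
          have : φ (MvPolynomial.X i) = 0 := by
            show MvPolynomial.aeval v (MvPolynomial.X i) = 0
            rw [MvPolynomial.aeval_X, hv]; exact if_pos rfl
          rw [this, zero_mul]
        · have : Polynomial.eval₂ φ r (Pp b i) = 0 := by
            rw [← Polynomial.eval_map, Pp_map b (MvPolynomial.aeval v) i]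
            exact Pp_eval_zero b i i0 h
          rw [this]
          ring
  -- Claim 2 : s divides D
  have claimS : s ∣ D := by
    set v : Fin (n+1) → MvPolynomial (Fin (n+1)) ℂ :=
      fun i => if i = 0 then MvPolynomial.X 0 - s else MvPolynomial.X i with hv
    set φ : MvPolynomial (Fin (n+1)) ℂ →+* MvPolynomial (Fin (n+1)) ℂ :=
      (MvPolynomial.aeval v).toRingHom with hφ
    have hsum : MvPolynomial.X (0 : Fin (n+1)) + ∑ j ∈ Finset.univ.erase 0, MvPolynomial.X j
        = s := by
      rw [hs]; exact Finset.add_sum_erase _ _ (Finset.mem_univ 0)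
    have haevs : φ s = 0 := by
      show MvPolynomial.aeval v s = 0
      rw [hs, map_sum, ← Finset.add_sum_erase _ _ (Finset.mem_univ (0 : Fin (n+1)))]
      rw [MvPolynomial.aeval_X]
      have h1 : v 0 = MvPolynomial.X 0 - s := if_pos rfl
      have h2 : ∑ j ∈ Finset.univ.erase 0, (MvPolynomial.aeval (R := ℂ) v) (MvPolynomial.X j)
          = ∑ j ∈ Finset.univ.erase 0, MvPolynomial.X j := by
        apply Finset.sum_congr rfl
        intro j hj
        rw [MvPolynomial.aeval_X, hv]
        exact if_neg (Finset.ne_of_mem_erase hj)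
      rw [h1, h2, ← hsum]
      ring
    apply dvd_of_aeval_eq_zero _ v
    · intro i
      by_cases h : i = 0
      · subst h
        have hvi : v 0 = MvPolynomial.X 0 - s := if_pos rfl
        rw [hvi, sub_sub_cancel]
        exact Ideal.subset_span rfl
      · have hvi : v i = MvPolynomial.X i := if_neg h
        rw [hvi, sub_self]
        exact Ideal.zero_mem _
    · show φ D = 0
      rw [hD, RingHom.map_det, RingHom.mapMatrix_apply, map_sylvester]
      apply sylvester_det_eq_zero_of_coeff_eq_zero _ _ n (2*n) (by omega)
      · exact le_trans Polynomial.natDegree_map_le hfdeg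
      · rw [Polynomial.coeff_map, hfcoeff, haevs]
      · exact le_trans Polynomial.natDegree_map_le hgdeg
      · rw [Polynomial.coeff_map, hgcoeff, haevs]
  -- X i does not divide s
  have hnotdvd : ∀ i : Fin (n+1), ¬ (MvPolynomial.X i : MvPolynomial (Fin (n+1)) ℂ) ∣ s := by
    intro i hdvd
    have hnt : Nontrivial (Fin (n+1)) :=
      ⟨⟨⟨0, by omega⟩, ⟨1, by omega⟩, by simp [Fin.ext_iff]⟩⟩
    obtain ⟨j0, hj0⟩ := exists_ne i
    set w : Fin (n+1) → ℂ := fun k => if k = j0 then 1 else 0 with hw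
    have h0 : MvPolynomial.eval w (MvPolynomial.X i) = 0 := by
      rw [MvPolynomial.eval_X, hw]
      exact if_neg (Ne.symm hj0)
    have h1 : MvPolynomial.eval w s = 1 := by
      rw [hs, map_sum]
      have : ∀ k : Fin (n+1), MvPolynomial.eval w (MvPolynomial.X k)
          = if k = j0 then (1:ℂ) else 0 := fun k => MvPolynomial.eval_X _
      rw [Finset.sum_congr rfl (fun k _ => this k), Finset.sum_ite_eq' Finset.univ j0 (fun _ => (1:ℂ))]
      simp
    have hdd := map_dvd (MvPolynomial.eval w) hdvd
    rw [h0, h1] at hdd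
    exact one_ne_zero (zero_dvd_iff.mp hdd)
  -- combine
  set L : List (MvPolynomial (Fin (n+1)) ℂ) :=
    s :: List.ofFn (fun i : Fin (n+1) => MvPolynomial.X i) with hL
  have hLdvd : L.prod ∣ D := by
    apply list_prod_primes_dvd
    · intro p hp
      rcases List.mem_cons.mp hp with rfl | hp'
      · exact prime_sum_X n
      · obtain ⟨i, rfl⟩ := List.mem_ofFn.mp hp'
        exact prime_X_mv n i
    · rw [List.pairwise_cons]
      refine ⟨?_, ?_⟩
      · intro q hq
        obtain ⟨i, rfl⟩ := List.mem_ofFn.mp hq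
        exact hnotdvd i
      · rw [List.pairwise_ofFn]
        intro i j hij hdvd
        rw [MvPolynomial.X_dvd_X] at hdvd
        exact absurd hdvd (ne_of_gt hij)
    · intro p hp
      rcases List.mem_cons.mp hp with rfl | hp'
      · exact claimS
      · obtain ⟨i, rfl⟩ := List.mem_ofFn.mp hp'
        exact claimX i
  rw [List.prod_cons, List.prod_ofFn] at hLdvd
  rw [mul_comm]
  exact hLdvd
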